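/- Let G = ⊕_{i=1}^{s} G_i be a finite abelian p-group with G_i homocyclic of exponent p^{n_i} and rank r_i, where n_1 < ⋯ < n_s. Then the Jacobson radical J of End(G), represented as a matrix ring (E_{ij}) with E_{ij} = Hom(G_i, G_j), satisfies J_{ij} = E_{ij} for i ≠ j and J_{ii} = p·E_{ii}. -/

import Mathlib

namespace Stmt5Aux

section

variable {p s : ℕ} {n r : Fin (s + 1) → ℕ}

lemma zmod_div (p : ℕ) (hp : p.Prime) {a b : ℕ} (hab : a < b) (c : ZMod (p ^ b))
    (hc : (p ^ a) • c = 0) : ∃ d, c = (p : ZMod (p ^ b)) * d := by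
  haveI : NeZero (p ^ b) := ⟨pow_ne_zero _ hp.pos.ne'⟩
  have h1 : ((p ^ a * c.val : ℕ) : ZMod (p ^ b)) = 0 := by
    rw [Nat.cast_mul, ZMod.natCast_val, ZMod.cast_id, ← nsmul_eq_mul, hc]
  obtain ⟨m, hm⟩ := (ZMod.natCast_eq_zero_iff _ _).mp h1
  have hm' : p ^ a * c.val = p ^ a * (p ^ (b - a) * m) := by
    rw [hm, ← mul_assoc, ← pow_add]
    congr 2
    omega
  have h3 : c.val = p ^ (b - a) * m :=
    Nat.eq_of_mul_eq_mul_left (Nat.pow_pos (n := a) hp.pos) hm'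
  have hba : b - a = (b - a - 1) + 1 := by omega
  refine ⟨((p ^ (b - a - 1) * m : ℕ) : ZMod (p ^ b)), ?_⟩
  have hcv : c = ((c.val : ℕ) : ZMod (p ^ b)) := by
    rw [ZMod.natCast_val, ZMod.cast_id]
  rw [hcv, h3, hba, pow_succ]
  push_cast
  ring



lemma vec_div {i : Fin (s + 1)} (v : Fin (r i) → ZMod (p ^ n i))
    (hv : ∀ k, ∃ d, v k = (p : ZMod (p ^ n i)) * d) :
    ∃ z : Fin (r i) → ZMod (p ^ n i), v = p • z := by
  choose d hd using hv
  refine ⟨d, funext fun k => ?_⟩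
  rw [Pi.smul_apply, nsmul_eq_mul, hd k]

/-- key lemma: if `x` has p-divisible blocks from `j` upward (with the `j`-th block's
divisibility only needed after applying `y`), then `(y x) j` is p-divisible. -/

lemma key (hp : p.Prime) (hmono : StrictMono n) (y : Module.End ℤ (∀ i : Fin (s + 1), Fin (r i) → ZMod (p ^ n i)))
    (x : ∀ i : Fin (s + 1), Fin (r i) → ZMod (p ^ n i)) (j : Fin (s + 1))
    (hdiag : ∀ k, ∃ d, (y (Pi.single j (x j))) j k = (p : ZMod (p ^ n j)) * d)
    (hx : ∀ i : Fin (s + 1), j < i → ∀ k, ∃ d, x i k = (p : ZMod (p ^ n i)) * d)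
    (k : Fin (r j)) :
    ∃ d, (y x) j k = (p : ZMod (p ^ n j)) * d := by
  have hxsum : x = ∑ i, Pi.single i (x i) := (Finset.univ_sum_single x).symm
  have hsum : (y x) j k = ∑ i, (y (Pi.single i (x i))) j k := by
    conv_lhs => rw [hxsum]
    rw [map_sum, Finset.sum_apply, Finset.sum_apply]
  have hterm : ∀ i : Fin (s + 1), ∃ d,
      (y (Pi.single i (x i))) j k = (p : ZMod (p ^ n j)) * d := by
    intro i
    rcases lt_trichotomy i j with hij | rfl | hij
    · -- torsion case
      have h0 : (p ^ n i) • (y (Pi.single i (x i))) = 0 := by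
        rw [← map_nsmul, ← Pi.single_smul]
        have : (p ^ n i) • (x i) = 0 := by
          funext k'
          rw [Pi.smul_apply, nsmul_eq_mul, Nat.cast_pow, ← Nat.cast_pow,
            ZMod.natCast_self, zero_mul, Pi.zero_apply]
        rw [this, Pi.single_zero, map_zero]
      have h1 : (p ^ n i) • ((y (Pi.single i (x i))) j k) = 0 := by
        have := congrFun (congrFun h0 j) k
        simpa using this
      exact zmod_div p hp (hmono hij) _ h1
    · exact hdiag k
    · obtain ⟨z, hz⟩ := vec_div (x i) (hx i hij)
      refine ⟨(y (Pi.single i z)) j k, ?_⟩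
      rw [hz, Pi.single_smul, map_nsmul, Pi.smul_apply, Pi.smul_apply, nsmul_eq_mul]
  choose d hd using hterm
  refine ⟨∑ i, d i, ?_⟩
  rw [hsum, Finset.mul_sum]
  exact Finset.sum_congr rfl fun i _ => hd i


lemma diag_block (hp : p.Prime) (hmono : StrictMono n)
    (f : Module.End ℤ (∀ i : Fin (s + 1), Fin (r i) → ZMod (p ^ n i)))
    (hP : ∀ i : Fin (s + 1), ∃ g : (Fin (r i) → ZMod (p ^ n i)) →ₗ[ℤ] (Fin (r i) → ZMod (p ^ n i)),
      (LinearMap.proj i) ∘ₗ (f : (∀ i, Fin (r i) → ZMod (p ^ n i)) →ₗ[ℤ] _) ∘ₗ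
        (LinearMap.single ℤ (fun i => Fin (r i) → ZMod (p ^ n i)) i) = p • g)
    (y : Module.End ℤ (∀ i : Fin (s + 1), Fin (r i) → ZMod (p ^ n i)))
    (i : Fin (s + 1)) (v : Fin (r i) → ZMod (p ^ n i)) (k : Fin (r i)) :
    ∃ d, ((y * f) (Pi.single i v)) i k = (p : ZMod (p ^ n i)) * d := by
  have hmul : ((y * f) (Pi.single i v)) = y (f (Pi.single i v)) := rfl
  rw [hmul]
  obtain ⟨g, hg⟩ := hP i
  have hblock : (f (Pi.single i v)) i = p • (g v) := by
    have := LinearMap.congr_fun hg v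
    simpa using this
  apply key hp hmono
  · -- hdiag
    intro k'
    rw [hblock, Pi.single_smul, map_nsmul]
    exact ⟨(y (Pi.single i (g v))) i k', by rw [Pi.smul_apply, Pi.smul_apply, nsmul_eq_mul]⟩
  · -- hx : blocks above i are torsion-divisible
    intro m him k'
    have h0 : (p ^ n i) • (f (Pi.single i v)) = 0 := by
      rw [← map_nsmul, ← Pi.single_smul]
      have : (p ^ n i) • v = 0 := by
        funext k''
        rw [Pi.smul_apply, nsmul_eq_mul, ZMod.natCast_self, zero_mul, Pi.zero_apply]
      rw [this, Pi.single_zero, map_zero]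
    have h1 : (p ^ n i) • ((f (Pi.single i v)) m k') = 0 := by
      have := congrFun (congrFun h0 m) k'
      simpa using this
    exact zmod_div p hp (hmono him) _ h1


lemma pow_div (hp : p.Prime) (hmono : StrictMono n)
    (h : Module.End ℤ (∀ i : Fin (s + 1), Fin (r i) → ZMod (p ^ n i)))
    (hDg : ∀ (i : Fin (s + 1)) (v : Fin (r i) → ZMod (p ^ n i)) (k : Fin (r i)),
      ∃ d, (h (Pi.single i v)) i k = (p : ZMod (p ^ n i)) * d)
    (x : ∀ i : Fin (s + 1), Fin (r i) → ZMod (p ^ n i)) (j : Fin (s + 1)) (k : Fin (r j)) :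
    ∃ d, ((h ^ (s + 1)) x) j k = (p : ZMod (p ^ n j)) * d := by
  suffices H : ∀ (m : ℕ) (x : ∀ i : Fin (s + 1), Fin (r i) → ZMod (p ^ n i)),
      (∀ j : Fin (s + 1), m ≤ (j : ℕ) → ∀ k, ∃ d, x j k = (p : ZMod (p ^ n j)) * d) →
      ∀ (j : Fin (s + 1)) (k : Fin (r j)), ∃ d, ((h ^ m) x) j k = (p : ZMod (p ^ n j)) * d by
    apply H (s + 1) x
    intro j hj
    exact absurd j.isLt (by omega)
  intro m
  induction m with
  | zero =>
    intro x hx j k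
    simpa using hx j (Nat.zero_le _) k
  | succ m ih =>
    intro x hx j k
    have hstep : ∀ j : Fin (s + 1), m ≤ (j : ℕ) → ∀ k, ∃ d,
        (h x) j k = (p : ZMod (p ^ n j)) * d := by
      intro j' hj' k'
      apply key hp hmono h x j'
      · intro k''
        exact hDg j' (x j') k''
      · intro i hi k''
        exact hx i (by omega) k''
      
    have : (h ^ (m + 1)) x = (h ^ m) (h x) := by
      rw [pow_succ]
      rfl
    rw [this]
    exact ih (h x) hstep j k


lemma one_sub_unit (hp : p.Prime) (hmono : StrictMono n)
    (h : Module.End ℤ (∀ i : Fin (s + 1), Fin (r i) → ZMod (p ^ n i)))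
    (hDg : ∀ (i : Fin (s + 1)) (v : Fin (r i) → ZMod (p ^ n i)) (k : Fin (r i)),
      ∃ d, (h (Pi.single i v)) i k = (p : ZMod (p ^ n i)) * d) :
    IsUnit (1 - h) := by
  set u : Module.End ℤ (∀ i : Fin (s + 1), Fin (r i) → ZMod (p ^ n i)) := 1 - h with hu
  -- geometric sum identity
  set S : Module.End ℤ (∀ i : Fin (s + 1), Fin (r i) → ZMod (p ^ n i)) :=
    ∑ t ∈ Finset.range (s + 1), h ^ t with hS
  have hgeom : u * S = 1 - h ^ (s + 1) := by
    have h1 : (h - 1) * S = h ^ (s + 1) - 1 := mul_geom_sum h (s + 1)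
    have : u * S = -((h - 1) * S) := by rw [hu]; noncomm_ring
    rw [this, h1, neg_sub]
  -- approximate surjectivity to all orders
  have happrox : ∀ (c : ℕ) (y0 : ∀ i : Fin (s + 1), Fin (r i) → ZMod (p ^ n i)),
      ∃ x0 z, y0 = u x0 + (p ^ c) • z := by
    intro c
    induction c with
    | zero =>
      intro y0
      exact ⟨0, y0, by simp⟩
    | succ c ih =>
      intro y0
      obtain ⟨x0, z, hxz⟩ := ih y0
      -- one more step on z
      choose d hd using pow_div hp hmono h hDg z
      have hz1 : (h ^ (s + 1)) z = p • (fun j k => d j k) := by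
        funext j k
        rw [hd j k, Pi.smul_apply, Pi.smul_apply, nsmul_eq_mul]
      have hz2 : z = u (S z) + p • (fun j k => d j k) := by
        have := LinearMap.congr_fun hgeom z
        rw [Module.End.mul_apply] at this
        rw [this] at *
        rw [← hz1]
        simp [LinearMap.sub_apply]
      refine ⟨x0 + (p ^ c) • S z, (fun j k => d j k), ?_⟩
      calc y0 = u x0 + (p ^ c) • z := hxz
        _ = u x0 + (p ^ c) • (u (S z) + p • (fun j k => d j k)) := by rw [← hz2]
        _ = u (x0 + (p ^ c) • S z) + (p ^ (c + 1)) • (fun j k => d j k) := by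
            rw [map_add, map_nsmul, smul_add, smul_smul, ← pow_succ, add_assoc]
  -- conclude surjectivity
  have hsurj : Function.Surjective u := by
    intro y0
    obtain ⟨x0, z, hxz⟩ := happrox (n (Fin.last s)) y0
    have hz0 : (p ^ n (Fin.last s)) • z = 0 := by
      funext j k
      rw [Pi.smul_apply, Pi.smul_apply, nsmul_eq_mul]
      have hle : n j ≤ n (Fin.last s) := hmono.monotone (Fin.le_last j)
      have : ((p ^ n (Fin.last s) : ℕ) : ZMod (p ^ n j)) = 0 := by
        have : p ^ n (Fin.last s) = p ^ n j * p ^ (n (Fin.last s) - n j) := by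
          rw [← pow_add]; congr 1; omega
        rw [this, Nat.cast_mul, ZMod.natCast_self, zero_mul]
      rw [this, zero_mul, Pi.zero_apply, Pi.zero_apply]
    exact ⟨x0, by rw [hxz, hz0, add_zero]⟩
  -- finiteness gives bijectivity
  haveI : ∀ i : Fin (s + 1), Finite (Fin (r i) → ZMod (p ^ n i)) := by
    intro i
    haveI : NeZero (p ^ n i) := ⟨pow_ne_zero _ hp.pos.ne'⟩
    infer_instance
  have hinj : Function.Injective u := (Finite.injective_iff_surjective).mpr hsurj
  exact (Module.End.isUnit_iff u).mpr ⟨hinj, hsurj⟩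


lemma entries_div (hp : p.Prime) (hpos : 0 < n 0) (hmono : StrictMono n)
    (f : Module.End ℤ (∀ i : Fin (s + 1), Fin (r i) → ZMod (p ^ n i)))
    (hf : f ∈ TwoSidedIdeal.jacobson
      (⊥ : TwoSidedIdeal (Module.End ℤ (∀ i : Fin (s + 1), Fin (r i) → ZMod (p ^ n i)))))
    (i : Fin (s + 1)) (l : Fin (r i)) (k : Fin (r i)) :
    ∃ d, (f (Pi.single i (Pi.single l (1 : ZMod (p ^ n i))))) i k
      = (p : ZMod (p ^ n i)) * d := by
  haveI : NeZero (p ^ n i) := ⟨pow_ne_zero _ hp.pos.ne'⟩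
  haveI : Fact (1 < p ^ n i) := by
    constructor
    have hni : 0 < n i := lt_of_lt_of_le hpos (hmono.monotone (Fin.zero_le i))
    exact Nat.one_lt_pow hni.ne' hp.one_lt
  by_contra hcon
  set c : ZMod (p ^ n i) := (f (Pi.single i (Pi.single l (1 : ZMod (p ^ n i))))) i k with hc
  have hcu : IsUnit c := by
    have hval : c = ((c.val : ℕ) : ZMod (p ^ n i)) := by
      rw [ZMod.natCast_val, ZMod.cast_id]
    rw [hval]
    rw [ZMod.isUnit_iff_coprime]
    apply Nat.Coprime.pow_right
    rw [Nat.coprime_comm, hp.coprime_iff_not_dvd]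
    rintro ⟨m, hm⟩
    apply hcon
    exact ⟨((m : ℕ) : ZMod (p ^ n i)), by rw [hval, hm, Nat.cast_mul]⟩
  -- build the endomorphism picking out this entry
  let w : (Fin (r i) → ZMod (p ^ n i)) →ₗ[ℤ] (Fin (r i) → ZMod (p ^ n i)) :=
    { toFun := fun x => Pi.single l ((↑hcu.unit⁻¹ : ZMod (p ^ n i)) * x k)
      map_add' := by
        intro x y
        rw [Pi.add_apply, mul_add, Pi.single_add]
      map_smul' := by
        intro cz x
        rw [RingHom.id_apply, Pi.smul_apply, mul_smul_comm, Pi.single_smul] }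
  let y : Module.End ℤ (∀ i : Fin (s + 1), Fin (r i) → ZMod (p ^ n i)) :=
    (LinearMap.single ℤ (fun i => Fin (r i) → ZMod (p ^ n i)) i) ∘ₗ w ∘ₗ (LinearMap.proj i)
  obtain ⟨z, hz⟩ := TwoSidedIdeal.mem_jacobson_iff.mp hf (-y)
  rw [TwoSidedIdeal.mem_bot] at hz
  have hz1 : z * (1 - y * f) = 1 := by
    have h2 : z * (1 - y * f) = z * (-y) * f + z := by noncomm_ring
    rw [h2]
    have h3 : z * (-y) * f + z - 1 = 0 := hz
    exact sub_eq_zero.mp h3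
  set v : ∀ i : Fin (s + 1), Fin (r i) → ZMod (p ^ n i) :=
    Pi.single i (Pi.single l (1 : ZMod (p ^ n i))) with hv
  have hyf : (y * f) v = v := by
    show y (f v) = v
    show (LinearMap.single ℤ (fun i => Fin (r i) → ZMod (p ^ n i)) i)
      (w ((f v) i)) = v
    show Pi.single i (Pi.single l ((↑hcu.unit⁻¹ : ZMod (p ^ n i)) * (f v) i k)) = v
    have : (f v) i k = c := rfl
    rw [this, IsUnit.val_inv_mul, hv]
  have hv0 : v = 0 := by
    have h4 : (1 - y * f) v = 0 := by
      rw [LinearMap.sub_apply, hyf, Module.End.one_apply, sub_self]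
    calc v = ((1 : Module.End ℤ _) : _ →ₗ[ℤ] _) v := rfl
      _ = (z * (1 - y * f)) v := by rw [hz1]
      _ = z ((1 - y * f) v) := rfl
      _ = 0 := by rw [h4, map_zero]
  have hone : (1 : ZMod (p ^ n i)) = 0 := by
    have := congrFun (congrFun hv0 i) l
    rw [hv, Pi.single_eq_same, Pi.single_eq_same] at this
    exact this
  exact one_ne_zero hone

lemma block_div (hp : p.Prime)
    (f : Module.End ℤ (∀ i : Fin (s + 1), Fin (r i) → ZMod (p ^ n i)))
    (i : Fin (s + 1))
    (hent : ∀ (l : Fin (r i)) (k : Fin (r i)),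
      ∃ d, (f (Pi.single i (Pi.single l (1 : ZMod (p ^ n i))))) i k
        = (p : ZMod (p ^ n i)) * d) :
    ∃ g : (Fin (r i) → ZMod (p ^ n i)) →ₗ[ℤ] (Fin (r i) → ZMod (p ^ n i)),
      (LinearMap.proj i) ∘ₗ (f : (∀ i, Fin (r i) → ZMod (p ^ n i)) →ₗ[ℤ] _) ∘ₗ
        (LinearMap.single ℤ (fun i => Fin (r i) → ZMod (p ^ n i)) i) = p • g := by
  haveI : NeZero (p ^ n i) := ⟨pow_ne_zero _ hp.pos.ne'⟩
  choose d hd using hent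
  refine ⟨{ toFun := fun x => fun k => ∑ l, x l * d l k
            map_add' := by
              intro x y
              funext k
              simp [add_mul, Finset.sum_add_distrib]
            map_smul' := by
              intro cz x
              funext k
              simp [smul_mul_assoc, Finset.smul_sum, mul_assoc] }, ?_⟩
  apply LinearMap.ext
  intro x
  have hinner : x = ∑ l, (x l).val • Pi.single l (1 : ZMod (p ^ n i)) := by
    conv_lhs => rw [← Finset.univ_sum_single x]
    refine Finset.sum_congr rfl fun l _ => ?_
    rw [← Pi.single_smul, nsmul_eq_mul, mul_one, ZMod.natCast_val, ZMod.cast_id]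
  have hx : (Pi.single i x : ∀ i : Fin (s + 1), Fin (r i) → ZMod (p ^ n i))
      = ∑ l, (x l).val • Pi.single i (Pi.single l (1 : ZMod (p ^ n i))) := by
    have h1 : (Pi.single i x : ∀ i : Fin (s + 1), Fin (r i) → ZMod (p ^ n i))
        = (LinearMap.single ℤ (fun i => Fin (r i) → ZMod (p ^ n i)) i) x := rfl
    rw [h1]
    conv_lhs => rw [hinner]
    rw [map_sum]
    exact Finset.sum_congr rfl fun l _ => by rw [map_nsmul]; rfl
  show (f (Pi.single i x)) i = _
  funext k
  have hLHS : (f (Pi.single i x)) i k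
      = ∑ l, (x l).val • ((p : ZMod (p ^ n i)) * d l k) := by
    rw [hx, map_sum, Finset.sum_apply, Finset.sum_apply]
    refine Finset.sum_congr rfl fun l _ => ?_
    rw [map_nsmul, Pi.smul_apply, Pi.smul_apply, hd l k]
  rw [hLHS, LinearMap.smul_apply, Pi.smul_apply]
  show _ = p • ∑ l, x l * d l k
  rw [Finset.smul_sum]
  refine Finset.sum_congr rfl fun l _ => ?_
  rw [nsmul_eq_mul, nsmul_eq_mul, ZMod.natCast_val, ZMod.cast_id]
  ring
end

end Stmt5Aux

/-- For `G = ⊕ G i` with `G i ≅ (ℤ/p^(n i))^(r i)` and `n` strictly increasing,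
the Jacobson radical `J` of `End(G)` consists exactly of the endomorphisms `f` whose
diagonal block components `f_{ii}` are divisible by `p` (off-diagonal blocks unrestricted):
`J_{ij} = E_{ij}` for `i ≠ j` and `J_{ii} = p E_{ii}`. -/
theorem stmt5 (p : ℕ) (hp : p.Prime) (s : ℕ) (n : Fin (s + 1) → ℕ)
    (hpos : 0 < n 0) (hmono : StrictMono n)
    (r : Fin (s + 1) → ℕ) (hr : ∀ i, 0 < r i)
    (f : Module.End ℤ (∀ i : Fin (s + 1), Fin (r i) → ZMod (p ^ n i))) :
    f ∈ TwoSidedIdeal.jacobson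
        (⊥ : TwoSidedIdeal (Module.End ℤ (∀ i : Fin (s + 1), Fin (r i) → ZMod (p ^ n i)))) ↔
    ∀ i : Fin (s + 1), ∃ g : (Fin (r i) → ZMod (p ^ n i)) →ₗ[ℤ] (Fin (r i) → ZMod (p ^ n i)),
      (LinearMap.proj i) ∘ₗ (f : (∀ i, Fin (r i) → ZMod (p ^ n i)) →ₗ[ℤ] _) ∘ₗ
        (LinearMap.single ℤ (fun i => Fin (r i) → ZMod (p ^ n i)) i) = p • g := by
  constructor
  · intro hf i
    exact Stmt5Aux.block_div hp f i
      (fun l k => Stmt5Aux.entries_div hp hpos hmono f hf i l k)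
  · intro hP
    rw [TwoSidedIdeal.mem_jacobson_iff]
    intro y
    have hDg := Stmt5Aux.diag_block hp hmono f hP (-y)
    have hu : IsUnit (1 - (-y) * f) := Stmt5Aux.one_sub_unit hp hmono ((-y) * f) hDg
    refine ⟨↑hu.unit⁻¹, ?_⟩
    rw [TwoSidedIdeal.mem_bot]
    have h1 : (↑hu.unit⁻¹ : Module.End ℤ (∀ i : Fin (s + 1),
        Fin (r i) → ZMod (p ^ n i))) * (1 - (-y) * f) = 1 := hu.val_inv_mul
    rw [sub_eq_zero]
    calc (↑hu.unit⁻¹ : Module.End ℤ (∀ i : Fin (s + 1),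
          Fin (r i) → ZMod (p ^ n i))) * y * f + ↑hu.unit⁻¹
        = ↑hu.unit⁻¹ * (1 - (-y) * f) := by noncomm_ring
      _ = 1 := h1
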